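/- Let s ∈ {1,…,m} and let μ, ν be partitions with at most m parts with l(μ) ≤ s and l(ν) ≤ s. Then μ and ν are conjugate under the dot action of W_p(C_s) if and only if |μ| − |ν| is even and, for every r ∈ {0, 1, …, (p−1)/2}, the number of indices i ∈ {1,…,s} with (μ+ρ)_i ≡ r or −r (mod p) equals the number of indices i ∈ {1,…,s} with (ν+ρ)_i ≡ r or −r (mod p). (Arrow-diagram formulation: μ and ν are W_p(C_s)-conjugate under the dot action iff |μ| − |ν| is even and their arrow diagrams have the same number of arrows at each node.) -/

import Mathlib

/-- ρ = (m, m-1, …, 1); with 0-indexed coordinates, ρ k = m - k. -/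
def rho {m : ℕ} : Fin m → ℤ := fun k => (m : ℤ) - (k : ℕ)

/-- A partition with at most m parts: weakly decreasing and nonnegative entries. -/
def IsPartitionVec {m : ℕ} (lam : Fin m → ℤ) : Prop :=
  (∀ i j : Fin m, i ≤ j → lam j ≤ lam i) ∧ ∀ i, 0 ≤ lam i

/-- The length of a partition: the number of nonzero entries. -/
def plen {m : ℕ} (lam : Fin m → ℤ) : ℕ :=
  (Finset.univ.filter fun i => lam i ≠ 0).card

/-- A vector is regular if all entries are nonzero and no two entries have
the same absolute value. -/
def Regular {m : ℕ} (v : Fin m → ℤ) : Prop :=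
  (∀ k, v k ≠ 0) ∧ ∀ k k', k ≠ k' → |v k| ≠ |v k'|

/-- Affine reflection s_{ε_i−ε_j,l}: x ↦ x − a(e_i − e_j), a = x_i − x_j − lp. -/
def sMinus {m : ℕ} (p : ℤ) (i j : Fin m) (l : ℤ) (x : Fin m → ℤ) : Fin m → ℤ :=
  fun k => x k - (x i - x j - l * p) * ((if k = i then 1 else 0) - (if k = j then 1 else 0))

/-- Affine reflection s_{ε_i+ε_j,l}: x ↦ x − a(e_i + e_j), a = x_i + x_j − lp. -/
def sPlus {m : ℕ} (p : ℤ) (i j : Fin m) (l : ℤ) (x : Fin m → ℤ) : Fin m → ℤ :=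
  fun k => x k - (x i + x j - l * p) * ((if k = i then 1 else 0) + (if k = j then 1 else 0))

/-- Affine reflection s_{2ε_i,l}: x ↦ x − 2a·e_i, a = x_i − lp. -/
def sDouble {m : ℕ} (p : ℤ) (i : Fin m) (l : ℤ) (x : Fin m → ℤ) : Fin m → ℤ :=
  fun k => x k - 2 * (x i - l * p) * (if k = i then 1 else 0)

/-- λ is a p-core: for every i and every l ≥ 1 with (λ+ρ)_i − lp > 0, the number
(λ+ρ)_i − lp occurs as an entry of λ+ρ. -/
def IsPCore {m : ℕ} (p : ℕ) (lam : Fin m → ℤ) : Prop :=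
  ∀ (i : Fin m) (l : ℤ), 1 ≤ l → 0 < lam i + rho i - l * p →
    ∃ j : Fin m, lam j + rho j = lam i + rho i - l * p

/-- The affine reflection s_{ε_i−ε_j,l} as a bijection of ℤ^m. -/
def sMinusPerm {m : ℕ} (p : ℤ) (i j : Fin m) (h : i ≠ j) (l : ℤ) :
    Equiv.Perm (Fin m → ℤ) :=
  Function.Involutive.toPerm (sMinus p i j l) (by
    intro x; funext k
    simp only [sMinus]
    by_cases hki : k = i <;> by_cases hkj : k = j <;>
      simp [hki, hkj, h, Ne.symm h] <;> ring)

/-- The affine reflection s_{ε_i+ε_j,l} as a bijection of ℤ^m. -/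
def sPlusPerm {m : ℕ} (p : ℤ) (i j : Fin m) (h : i ≠ j) (l : ℤ) :
    Equiv.Perm (Fin m → ℤ) :=
  Function.Involutive.toPerm (sPlus p i j l) (by
    intro x; funext k
    simp only [sPlus]
    by_cases hki : k = i <;> by_cases hkj : k = j <;>
      simp [hki, hkj, h, Ne.symm h] <;> ring)

/-- The affine reflection s_{2ε_i,l} as a bijection of ℤ^m. -/
def sDoublePerm {m : ℕ} (p : ℤ) (i : Fin m) (l : ℤ) :
    Equiv.Perm (Fin m → ℤ) :=
  Function.Involutive.toPerm (sDouble p i l) (by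
    intro x; funext k
    simp only [sDouble]
    by_cases hki : k = i <;> simp [hki] <;> ring)

/-- Generators of W_p(D_s): the reflections s_{ε_i−ε_j,l} and s_{ε_i+ε_j,l}
for 1 ≤ i < j ≤ s (0-indexed: i < j, (j:ℕ) < s) and l ∈ ℤ. -/
def DGenerators (m : ℕ) (p : ℤ) (s : ℕ) : Set (Equiv.Perm (Fin m → ℤ)) :=
  {σ | ∃ (i j : Fin m) (l : ℤ) (h : i < j), (j : ℕ) < s ∧
        (σ = sMinusPerm p i j h.ne l ∨ σ = sPlusPerm p i j h.ne l)}

/-- The affine Weyl group W_p(D_s). -/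
def WpD (m : ℕ) (p : ℤ) (s : ℕ) : Subgroup (Equiv.Perm (Fin m → ℤ)) :=
  Subgroup.closure (DGenerators m p s)

/-- Generators of W_p(C_s): those of W_p(D_s) together with the reflections
s_{2ε_i,l} for 1 ≤ i ≤ s (0-indexed: (i:ℕ) < s) and l ∈ ℤ. -/
def CGenerators (m : ℕ) (p : ℤ) (s : ℕ) : Set (Equiv.Perm (Fin m → ℤ)) :=
  DGenerators m p s ∪ {σ | ∃ (i : Fin m) (l : ℤ), (i : ℕ) < s ∧ σ = sDoublePerm p i l}

/-- The affine Weyl group W_p(C_s). -/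
def WpC (m : ℕ) (p : ℤ) (s : ℕ) : Subgroup (Equiv.Perm (Fin m → ℤ)) :=
  Subgroup.closure (CGenerators m p s)

/-- μ and ν are conjugate under the dot action of the group G:
some element of G maps μ+ρ to ν+ρ. -/
def DotConj {m : ℕ} (G : Subgroup (Equiv.Perm (Fin m → ℤ))) (mu nu : Fin m → ℤ) : Prop :=
  ∃ g ∈ G, g (fun k => mu k + rho k) = fun k => nu k + rho k

section Aux
variable {m : ℕ}

/-- application lemmas for the reflections -/
lemma sMinus_apply_i {p : ℤ} {i j : Fin m} (hij : i ≠ j) (l : ℤ) (x : Fin m → ℤ) :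
    sMinus p i j l x i = x j + l * p := by
  simp [sMinus, hij]; ring

lemma sMinus_apply_j {p : ℤ} {i j : Fin m} (hij : i ≠ j) (l : ℤ) (x : Fin m → ℤ) :
    sMinus p i j l x j = x i - l * p := by
  simp [sMinus, Ne.symm hij]; ring

lemma sMinus_apply_other {p : ℤ} {i j k : Fin m} (hki : k ≠ i) (hkj : k ≠ j) (l : ℤ)
    (x : Fin m → ℤ) : sMinus p i j l x k = x k := by
  simp [sMinus, hki, hkj]

lemma sPlus_apply_i {p : ℤ} {i j : Fin m} (hij : i ≠ j) (l : ℤ) (x : Fin m → ℤ) :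
    sPlus p i j l x i = -x j + l * p := by
  simp [sPlus, hij]; ring

lemma sPlus_apply_j {p : ℤ} {i j : Fin m} (hij : i ≠ j) (l : ℤ) (x : Fin m → ℤ) :
    sPlus p i j l x j = -x i + l * p := by
  simp [sPlus, Ne.symm hij]; ring

lemma sPlus_apply_other {p : ℤ} {i j k : Fin m} (hki : k ≠ i) (hkj : k ≠ j) (l : ℤ)
    (x : Fin m → ℤ) : sPlus p i j l x k = x k := by
  simp [sPlus, hki, hkj]

lemma sDouble_apply_i {p : ℤ} (i : Fin m) (l : ℤ) (x : Fin m → ℤ) :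
    sDouble p i l x i = -x i + 2 * l * p := by
  simp [sDouble]; ring

lemma sDouble_apply_other {p : ℤ} {i k : Fin m} (hki : k ≠ i) (l : ℤ) (x : Fin m → ℤ) :
    sDouble p i l x k = x k := by
  simp [sDouble, hki]

lemma sMinusPerm_apply {p : ℤ} {i j : Fin m} (h : i ≠ j) (l : ℤ) (x : Fin m → ℤ) :
    sMinusPerm p i j h l x = sMinus p i j l x := rfl

lemma sPlusPerm_apply {p : ℤ} {i j : Fin m} (h : i ≠ j) (l : ℤ) (x : Fin m → ℤ) :
    sPlusPerm p i j h l x = sPlus p i j l x := rfl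

lemma sDoublePerm_apply {p : ℤ} (i : Fin m) (l : ℤ) (x : Fin m → ℤ) :
    sDoublePerm p i l x = sDouble p i l x := rfl

/-- translation by p•t -/
def trPerm (p : ℤ) (t : Fin m → ℤ) : Equiv.Perm (Fin m → ℤ) where
  toFun := fun x k => x k + p * t k
  invFun := fun x k => x k - p * t k
  left_inv := by intro x; funext k; ring
  right_inv := by intro x; funext k; ring

lemma trPerm_apply (p : ℤ) (t x : Fin m → ℤ) (k : Fin m) :
    trPerm p t x k = x k + p * t k := rfl

lemma trPerm_zero (p : ℤ) : trPerm (m := m) p 0 = 1 := by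
  apply Equiv.ext; intro x; funext k
  simp only [trPerm_apply, Pi.zero_apply, mul_zero, add_zero, Equiv.Perm.one_apply]

lemma trPerm_add (p : ℤ) (a b : Fin m → ℤ) :
    trPerm p (a + b) = trPerm p a * trPerm p b := by
  apply Equiv.ext; intro x; funext k
  simp [trPerm_apply, Equiv.Perm.mul_apply, Pi.add_apply]; ring

/-- sign flips on a finset -/
def sgPerm (D : Finset (Fin m)) : Equiv.Perm (Fin m → ℤ) :=
  Function.Involutive.toPerm (fun x k => if k ∈ D then -x k else x k) (by
    intro x; funext k; by_cases h : k ∈ D <;> simp [h])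

lemma sgPerm_apply (D : Finset (Fin m)) (x : Fin m → ℤ) (k : Fin m) :
    sgPerm D x k = if k ∈ D then -x k else x k := rfl

/-- permutation of coordinates: x ↦ x ∘ σ.symm -/
def permMap (σ : Equiv.Perm (Fin m)) : Equiv.Perm (Fin m → ℤ) where
  toFun := fun x => x ∘ σ.symm
  invFun := fun x => x ∘ σ
  left_inv := by intro x; funext k; simp
  right_inv := by intro x; funext k; simp

lemma permMap_apply (σ : Equiv.Perm (Fin m)) (x : Fin m → ℤ) (k : Fin m) :
    permMap σ x k = x (σ.symm k) := rfl

lemma permMap_mul (σ τ : Equiv.Perm (Fin m)) :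
    permMap (σ * τ) = permMap σ * permMap τ := by
  apply Equiv.ext; intro x; funext k
  simp [permMap_apply, Equiv.Perm.mul_apply, Equiv.Perm.mul_def, Equiv.symm_trans_apply]

lemma permMap_one : permMap (m := m) 1 = 1 := by
  apply Equiv.ext; intro x; funext k
  simp [permMap_apply, Equiv.Perm.one_apply]; rfl

end Aux
section Mem
variable {m : ℕ} (p : ℤ) (s : ℕ)

def esingle (i : Fin m) (c : ℤ) : Fin m → ℤ := fun k => if k = i then c else 0
def epair (i j : Fin m) (c : ℤ) : Fin m → ℤ :=
  fun k => if k = i then c else if k = j then -c else 0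

lemma mem_gen_minus {i j : Fin m} (hij : i < j) (hjs : (j:ℕ) < s) (l : ℤ) :
    sMinusPerm p i j hij.ne l ∈ WpC m p s :=
  Subgroup.subset_closure (Or.inl ⟨i, j, l, hij, hjs, Or.inl rfl⟩)

lemma mem_gen_double {i : Fin m} (his : (i:ℕ) < s) (l : ℤ) :
    sDoublePerm p i l ∈ WpC m p s :=
  Subgroup.subset_closure (Or.inr ⟨i, l, his, rfl⟩)

lemma mem_tr_single {i : Fin m} (his : (i:ℕ) < s) (c : ℤ) :
    trPerm p (esingle i (2 * c)) ∈ WpC m p s := by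
  have key : trPerm p (esingle i (2*c)) = sDoublePerm p i c * sDoublePerm p i 0 := by
    apply Equiv.ext; intro x; funext k
    rw [Equiv.Perm.mul_apply, sDoublePerm_apply, sDoublePerm_apply, trPerm_apply]
    by_cases hk : k = i
    · subst hk; rw [sDouble_apply_i, sDouble_apply_i]; simp [esingle]; ring
    · rw [sDouble_apply_other hk, sDouble_apply_other hk]; simp [esingle, hk]
  rw [key]; exact mul_mem (mem_gen_double p s his c) (mem_gen_double p s his 0)

lemma mem_tr_pair {i j : Fin m} (hij : i ≠ j) (his : (i:ℕ) < s) (hjs : (j:ℕ) < s) (c : ℤ) :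
    trPerm p (epair i j c) ∈ WpC m p s := by
  rcases lt_or_gt_of_ne hij with h | h
  · have key : trPerm p (epair i j c) = sMinusPerm p i j h.ne c * sMinusPerm p i j h.ne 0 := by
      apply Equiv.ext; intro x; funext k
      rw [Equiv.Perm.mul_apply, sMinusPerm_apply, sMinusPerm_apply, trPerm_apply]
      by_cases hki : k = i
      · subst hki
        rw [sMinus_apply_i hij, sMinus_apply_j hij]; simp [epair]; ring
      · by_cases hkj : k = j
        · subst hkj
          rw [sMinus_apply_j hij, sMinus_apply_i hij]; simp [epair, Ne.symm hij]; ring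
        · rw [sMinus_apply_other hki hkj, sMinus_apply_other hki hkj]
          simp [epair, hki, hkj]
    rw [key]; exact mul_mem (mem_gen_minus p s h hjs c) (mem_gen_minus p s h hjs 0)
  · have hji : j ≠ i := Ne.symm hij
    have key : trPerm p (epair i j c) = sMinusPerm p j i h.ne (-c) * sMinusPerm p j i h.ne 0 := by
      apply Equiv.ext; intro x; funext k
      rw [Equiv.Perm.mul_apply, sMinusPerm_apply, sMinusPerm_apply, trPerm_apply]
      by_cases hki : k = i
      · subst hki
        rw [sMinus_apply_j hji, sMinus_apply_i hji]; simp [epair]; ring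
      · by_cases hkj : k = j
        · subst hkj
          rw [sMinus_apply_i hji, sMinus_apply_j hji]; simp [epair, Ne.symm hij]; ring
        · rw [sMinus_apply_other hkj hki, sMinus_apply_other hkj hki]
          simp [epair, hki, hkj]
    rw [key]; exact mul_mem (mem_gen_minus p s h his (-c)) (mem_gen_minus p s h his 0)

lemma mem_sg : ∀ D : Finset (Fin m), (∀ i ∈ D, (i:ℕ) < s) → sgPerm D ∈ WpC m p s := by
  intro D
  induction D using Finset.induction_on with
  | empty =>
    intro _
    have : sgPerm (∅ : Finset (Fin m)) = 1 := by
      apply Equiv.ext; intro x; funext k; simp [sgPerm_apply, Equiv.Perm.one_apply]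
    rw [this]; exact one_mem _
  | @insert i D hiD ih =>
    intro hD
    have key : sgPerm (insert i D) = sDoublePerm p i 0 * sgPerm D := by
      apply Equiv.ext; intro x; funext k
      rw [Equiv.Perm.mul_apply, sDoublePerm_apply, sgPerm_apply]
      by_cases hk : k = i
      · subst hk; rw [sDouble_apply_i]
        simp [sgPerm_apply, hiD]
      · rw [sDouble_apply_other hk]
        simp [sgPerm_apply, Finset.mem_insert, hk]
    rw [key]
    exact mul_mem (mem_gen_double p s (hD i (Finset.mem_insert_self i D)) 0)
      (ih fun j hj => hD j (Finset.mem_insert_of_mem hj))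

lemma perm_swap_mem {a b : Fin m} (hab : a < b) (hbs : (b:ℕ) < s) :
    permMap (Equiv.swap a b) ∈ WpC m p s := by
  have hne : a ≠ b := hab.ne
  have key : permMap (Equiv.swap a b) = sMinusPerm p a b hne 0 := by
    apply Equiv.ext; intro x; funext k
    rw [permMap_apply, sMinusPerm_apply, Equiv.symm_swap]
    by_cases hka : k = a
    · subst hka; rw [Equiv.swap_apply_left, sMinus_apply_i hne]; ring
    · by_cases hkb : k = b
      · subst hkb; rw [Equiv.swap_apply_right, sMinus_apply_j hne]; ring
      · rw [Equiv.swap_apply_of_ne_of_ne hka hkb, sMinus_apply_other hka hkb]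
  rw [key]; exact mem_gen_minus p s hab hbs 0

lemma mem_perm : ∀ (n : ℕ) (σ : Equiv.Perm (Fin m)), σ.support.card ≤ n →
    (∀ i : Fin m, s ≤ (i:ℕ) → σ i = i) → permMap σ ∈ WpC m p s
  := by
  intro n
  induction n with
  | zero =>
    intro σ h _
    have : σ = 1 := by
      rwa [Nat.le_zero, Finset.card_eq_zero, Equiv.Perm.support_eq_empty_iff] at h
    rw [this, permMap_one]; exact one_mem _
  | succ n ih =>
    intro σ h hfix
    by_cases h0 : σ = 1
    · rw [h0, permMap_one]; exact one_mem _
    · obtain ⟨a, ha⟩ : ∃ a, σ a ≠ a := by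
        by_contra hc; push_neg at hc
        exact h0 (Equiv.ext fun a => by rw [hc a, Equiv.Perm.one_apply])
      have has : (a:ℕ) < s := by
        by_contra hc; push_neg at hc; exact ha (hfix a hc)
      have hba : σ a ≠ a := ha
      have hbs : ((σ a : Fin m) : ℕ) < s := by
        by_contra hc; push_neg at hc
        have h2 := hfix (σ a) hc
        exact hba (σ.injective h2)
      have hcard : (Equiv.swap a (σ a) * σ).support.card ≤ n := by
        have := Equiv.Perm.card_support_swap_mul (f := σ) (x := a) ha
        omega
      have hfix' : ∀ i : Fin m, s ≤ (i:ℕ) → (Equiv.swap a (σ a) * σ) i = i := by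
        intro i hi
        rw [Equiv.Perm.mul_apply, hfix i hi, Equiv.swap_apply_of_ne_of_ne]
        · exact fun hia => absurd (hia ▸ hi) (by omega)
        · exact fun hib => absurd (hib ▸ hi) (by omega)
      have hswap : permMap (Equiv.swap a (σ a)) ∈ WpC m p s := by
        rcases lt_or_gt_of_ne hba.symm with hlt | hgt
        · exact perm_swap_mem p s hlt hbs
        · rw [Equiv.swap_comm]; exact perm_swap_mem p s hgt has
      have hdec : σ = Equiv.swap a (σ a) * (Equiv.swap a (σ a) * σ) := by
        rw [← mul_assoc, Equiv.swap_mul_self, one_mul]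
      rw [hdec, permMap_mul]
      exact mul_mem hswap (ih _ hcard hfix')

lemma mem_tr_sum {ι : Type} (f : ι → Fin m → ℤ) :
    ∀ F : Finset ι, (∀ i ∈ F, trPerm p (f i) ∈ WpC m p s) →
      trPerm p (∑ i ∈ F, f i) ∈ WpC m p s := by
  intro F
  induction F using Finset.cons_induction with
  | empty => intro _; simpa [trPerm_zero] using (one_mem (WpC m p s))
  | cons a F ha ih =>
    intro hf
    rw [Finset.sum_cons, trPerm_add]
    exact mul_mem (hf a (Finset.mem_cons_self a F))
      (ih fun i hi => hf i (Finset.mem_cons_of_mem hi))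

lemma mem_tr (hs1 : 1 ≤ s) (hsm : s ≤ m) (t : Fin m → ℤ)
    (ht0 : ∀ i : Fin m, s ≤ (i:ℕ) → t i = 0) (hev : Even (∑ i, t i)) :
    trPerm p t ∈ WpC m p s := by
  obtain ⟨h, hh⟩ := hev
  have hm : 0 < m := lt_of_lt_of_le hs1 hsm
  set i0 : Fin m := ⟨0, hm⟩ with hi0def
  have hi0s : (i0:ℕ) < s := hs1
  have key : t = esingle i0 (2*h) + ∑ i : Fin m, (if i = i0 then 0 else epair i i0 (t i)) := by
    funext k
    rw [Pi.add_apply, Finset.sum_apply]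
    by_cases hk : k = i0
    · have step : ∀ i : Fin m,
          (if i = i0 then (0 : Fin m → ℤ) else epair i i0 (t i)) k
            = -t i + (if i = i0 then t i else 0) := by
        intro i
        by_cases hi : i = i0
        · simp [hi]
        · have h1 : k ≠ i := fun hc => hi (by rw [← hc, hk])
          have h2 : i0 ≠ i := fun hc => hi hc.symm
          simp [hi, epair, h1, h2, hk]
      rw [Finset.sum_congr rfl (fun i _ => step i), Finset.sum_add_distrib]
      simp only [esingle, hk, if_pos rfl, Finset.sum_neg_distrib, Finset.sum_ite_eq',
        Finset.mem_univ, if_true]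
      rw [hh]; ring
    · have step : ∀ i : Fin m,
          (if i = i0 then (0 : Fin m → ℤ) else epair i i0 (t i)) k
            = (if k = i then t i else 0) := by
        intro i
        by_cases hi : i = i0
        · subst hi; simp [hk]
        · simp [hi, epair, hk]
      rw [Finset.sum_congr rfl (fun i _ => step i)]
      simp [esingle, hk, Finset.sum_ite_eq]
  rw [key, trPerm_add]
  apply mul_mem (mem_tr_single p s hi0s h)
  apply mem_tr_sum
  intro i _
  by_cases hi : i = i0
  · rw [if_pos hi, trPerm_zero]; exact one_mem _
  · rw [if_neg hi]
    by_cases his : (i:ℕ) < s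
    · exact mem_tr_pair p s hi his hi0s (t i)
    · have ht : t i = 0 := ht0 i (le_of_not_gt his)
      have : epair i i0 (t i) = 0 := by funext k; simp [epair, ht]
      rw [this, trPerm_zero]; exact one_mem _

end Mem
section Forward
variable {m : ℕ}

lemma modeq_shift (p a l r : ℤ) : Int.ModEq p (a + l * p) r ↔ Int.ModEq p a r := by
  have he : (a + l * p) % p = a % p := by
    rw [mul_comm, Int.add_mul_emod_self_left]
  unfold Int.ModEq
  rw [he]

lemma modeq_shift_sub (p a l r : ℤ) : Int.ModEq p (a - l * p) r ↔ Int.ModEq p a r := by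
  rw [sub_eq_add_neg, ← neg_mul]
  exact modeq_shift p a (-l) r

lemma modeq_negpair (p a r : ℤ) :
    (Int.ModEq p (-a) r ∨ Int.ModEq p (-a) (-r)) ↔
      (Int.ModEq p a r ∨ Int.ModEq p a (-r)) := by
  have h1 : Int.ModEq p (-a) r ↔ Int.ModEq p a (-r) :=
    ⟨fun h => by simpa using h.neg, fun h => by simpa using h.neg⟩
  have h2 : Int.ModEq p (-a) (-r) ↔ Int.ModEq p a r :=
    ⟨fun h => by simpa using h.neg, fun h => by simpa using h.neg⟩
  rw [h1, h2]; exact or_comm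

lemma sum_sMinus (p : ℤ) {i j : Fin m} (hij : i ≠ j) (l : ℤ) (x : Fin m → ℤ) :
    ∑ k, sMinus p i j l x k = ∑ k, x k := by
  simp only [sMinus]
  rw [Finset.sum_sub_distrib, ← Finset.mul_sum, Finset.sum_sub_distrib]
  simp [Finset.sum_ite_eq']

lemma sum_sPlus (p : ℤ) {i j : Fin m} (hij : i ≠ j) (l : ℤ) (x : Fin m → ℤ) :
    ∑ k, sPlus p i j l x k = (∑ k, x k) - 2 * (x i + x j - l * p) := by
  simp only [sPlus]
  rw [Finset.sum_sub_distrib, ← Finset.mul_sum, Finset.sum_add_distrib]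
  simp [Finset.sum_ite_eq']
  ring

lemma sum_sDouble (p : ℤ) (i : Fin m) (l : ℤ) (x : Fin m → ℤ) :
    ∑ k, sDouble p i l x k = (∑ k, x k) - 2 * (x i - l * p) := by
  simp only [sDouble]
  rw [Finset.sum_sub_distrib, ← Finset.mul_sum]
  simp [Finset.sum_ite_eq']

lemma fwd_even (p : ℤ) (s : ℕ) {g : Equiv.Perm (Fin m → ℤ)} (hg : g ∈ WpC m p s) :
    ∀ x : Fin m → ℤ, Even ((∑ k, g x k) - ∑ k, x k) := by
  induction hg using Subgroup.closure_induction with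
  | mem σ hσ =>
    intro x
    rcases hσ with ⟨i, j, l, hij, hjs, hor⟩ | ⟨i, l, his, rfl⟩
    · rcases hor with rfl | rfl
      · rw [sMinusPerm_apply hij.ne, sum_sMinus p hij.ne]
        simp
      · rw [sPlusPerm_apply hij.ne, sum_sPlus p hij.ne]
        exact ⟨-(x i + x j - l * p), by ring⟩
    · rw [sDoublePerm_apply, sum_sDouble]
      exact ⟨-(x i - l * p), by ring⟩
  | one => intro x; simp [Equiv.Perm.one_apply]
  | mul a b ha hb iha ihb =>
    intro x
    have h1 := iha (b x)
    have h2 := ihb x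
    have := h1.add h2
    simpa [Equiv.Perm.mul_apply] using this
  | inv a ha iha =>
    intro x
    have := (iha (a⁻¹ x)).neg
    simp only [Equiv.Perm.inv_def, Equiv.apply_symm_apply] at this
    simpa [neg_sub] using this

lemma fwd_cnt (p : ℤ) (s : ℕ) {g : Equiv.Perm (Fin m → ℤ)} (hg : g ∈ WpC m p s) :
    ∀ (x : Fin m → ℤ) (r : ℤ),
      Nat.card {k : Fin m // (k:ℕ) < s ∧ (Int.ModEq p (g x k) r ∨ Int.ModEq p (g x k) (-r))} =
      Nat.card {k : Fin m // (k:ℕ) < s ∧ (Int.ModEq p (x k) r ∨ Int.ModEq p (x k) (-r))} := by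
  induction hg using Subgroup.closure_induction with
  | mem σ hσ =>
    intro x r
    rcases hσ with ⟨i, j, l, hij, hjs, hor⟩ | ⟨i, l, his, rfl⟩
    · have hijn : (i:ℕ) < (j:ℕ) := hij
      have his : (i:ℕ) < s := by omega
      rcases hor with rfl | rfl
      · apply Nat.card_congr
        apply Equiv.subtypeEquiv (Equiv.swap i j)
        intro k
        rw [sMinusPerm_apply hij.ne]
        by_cases hki : k = i
        · rw [hki, Equiv.swap_apply_left, sMinus_apply_i hij.ne,
            modeq_shift p (x j) l r, modeq_shift p (x j) l (-r)]
          simp [his, hjs]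
        · by_cases hkj : k = j
          · rw [hkj, Equiv.swap_apply_right, sMinus_apply_j hij.ne,
              modeq_shift_sub p (x i) l r, modeq_shift_sub p (x i) l (-r)]
            simp [his, hjs]
          · rw [Equiv.swap_apply_of_ne_of_ne hki hkj, sMinus_apply_other hki hkj]
      · apply Nat.card_congr
        apply Equiv.subtypeEquiv (Equiv.swap i j)
        intro k
        rw [sPlusPerm_apply hij.ne]
        by_cases hki : k = i
        · rw [hki, Equiv.swap_apply_left, sPlus_apply_i hij.ne,
            modeq_shift p (-(x j)) l r, modeq_shift p (-(x j)) l (-r), modeq_negpair p (x j) r]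
          simp [his, hjs]
        · by_cases hkj : k = j
          · rw [hkj, Equiv.swap_apply_right, sPlus_apply_j hij.ne,
              modeq_shift p (-(x i)) l r, modeq_shift p (-(x i)) l (-r), modeq_negpair p (x i) r]
            simp [his, hjs]
          · rw [Equiv.swap_apply_of_ne_of_ne hki hkj, sPlus_apply_other hki hkj]
    · apply Nat.card_congr
      apply Equiv.subtypeEquiv (Equiv.refl _)
      intro k
      rw [sDoublePerm_apply]
      by_cases hki : k = i
      · rw [hki, sDouble_apply_i, show -x i + 2*l*p = -x i + (2*l)*p from by ring,
          modeq_shift p (-(x i)) (2*l) r, modeq_shift p (-(x i)) (2*l) (-r),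
          modeq_negpair p (x i) r]
        simp
      · rw [sDouble_apply_other hki]
        simp
  | one => intro x r; simp [Equiv.Perm.one_apply]
  | mul a b ha hb iha ihb =>
    intro x r
    have h1 := iha (b x) r
    have h2 := ihb x r
    simpa [Equiv.Perm.mul_apply] using h1.trans h2
  | inv a ha iha =>
    intro x r
    have := iha (a⁻¹ x) r
    simp only [Equiv.Perm.inv_def, Equiv.apply_symm_apply] at this
    exact this.symm

end Forward
section Backward
variable {m : ℕ}

def minres (p a : ℤ) : ℤ := min (a % p) (p - a % p)

lemma minres_nonneg {p : ℤ} (hp : 0 < p) (a : ℤ) : 0 ≤ minres p a := by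
  have h0 : 0 ≤ a % p := Int.emod_nonneg a (by omega)
  have h1 : a % p < p := Int.emod_lt_of_pos a hp
  unfold minres
  rcases le_total (a % p) (p - a % p) with h | h
  · rw [min_eq_left h]; omega
  · rw [min_eq_right h]; omega

lemma minres_lt {p : ℤ} (hp : 0 < p) (hodd : p % 2 = 1) (a : ℤ) :
    2 * minres p a < p := by
  have h0 : 0 ≤ a % p := Int.emod_nonneg a (by omega)
  have h1 : a % p < p := Int.emod_lt_of_pos a hp
  unfold minres
  rcases le_total (a % p) (p - a % p) with h | h
  · rw [min_eq_left h]; omega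
  · rw [min_eq_right h]; omega

lemma minres_eq_iff {p : ℤ} (hp : 0 < p) {v : ℤ} (hv0 : 0 ≤ v) (hv : 2 * v < p) (a : ℤ) :
    minres p a = v ↔ (Int.ModEq p a v ∨ Int.ModEq p a (-v)) := by
  have h0 : 0 ≤ a % p := Int.emod_nonneg a (by omega)
  have h1 : a % p < p := Int.emod_lt_of_pos a hp
  have hvmod : v % p = v := Int.emod_eq_of_lt hv0 (by omega)
  have hmin : minres p a = v ↔ (a % p = v ∨ a % p = p - v) := by
    unfold minres
    rcases le_total (a % p) (p - a % p) with h | h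
    · rw [min_eq_left h]; omega
    · rw [min_eq_right h]; omega
  rcases eq_or_lt_of_le hv0 with hv0' | hv0'
  · -- v = 0
    have hnegmod : (-v) % p = 0 := by rw [← hv0']; simp
    unfold Int.ModEq
    rw [hmin, hvmod, hnegmod, ← hv0']
    omega
  · have hnegmod : (-v) % p = p - v := by
      have h2 : (-v + p) % p = -v + p := Int.emod_eq_of_lt (by omega) (by omega)
      have h3 : (-v) % p = (-v + p) % p := by
        rw [show -v + p = -v + p * 1 by ring, Int.add_mul_emod_self_left]
      rw [h3, h2]; ring
    unfold Int.ModEq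
    rw [hmin, hvmod, hnegmod]

lemma minres_eq_minres {p : ℤ} (hp : 0 < p) {a b : ℤ} (h : minres p a = minres p b) :
    p ∣ (b - a) ∨ p ∣ (b + a) := by
  have h0a : 0 ≤ a % p := Int.emod_nonneg a (by omega)
  have h1a : a % p < p := Int.emod_lt_of_pos a hp
  have h0b : 0 ≤ b % p := Int.emod_nonneg b (by omega)
  have h1b : b % p < p := Int.emod_lt_of_pos b hp
  have key : a % p = b % p ∨ a % p + b % p = p := by
    unfold minres at h
    rcases le_total (a % p) (p - a % p) with h2 | h2 <;>
      rcases le_total (b % p) (p - b % p) with h3 | h3 <;>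
        [rw [min_eq_left h2, min_eq_left h3] at h;
         rw [min_eq_left h2, min_eq_right h3] at h;
         rw [min_eq_right h2, min_eq_left h3] at h;
         rw [min_eq_right h2, min_eq_right h3] at h] <;> omega
  rcases key with h2 | h2
  · exact Or.inl (Int.ModEq.dvd (h2 : Int.ModEq p a b))
  · right
    have h3 : (b + a) % p = (b % p + a % p) % p := Int.add_emod b a p
    rw [show b % p + a % p = p by omega, Int.emod_self] at h3
    exact Int.dvd_of_emod_eq_zero h3

lemma part_tail {s : ℕ} {lam : Fin m → ℤ} (h : IsPartitionVec lam) (hl : plen lam ≤ s)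
    {i : Fin m} (hi : s ≤ (i:ℕ)) : lam i = 0 := by
  by_contra hne
  have hsub : Finset.Iic i ⊆ Finset.univ.filter (fun j => lam j ≠ 0) := by
    intro j hj
    simp only [Finset.mem_filter, Finset.mem_univ, true_and]
    intro h0
    exact hne (le_antisymm (h0 ▸ h.1 j i (Finset.mem_Iic.mp hj)) (h.2 i))
  have hcard := Finset.card_le_card hsub
  rw [Fin.card_Iic] at hcard
  unfold plen at hl
  omega
def cls_fiber_good (p : ℤ) (s : ℕ) (z : Fin m → ℤ) {v : ℤ} (hv0 : 0 ≤ v) (hvp : v < p) :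
    {i : Fin m // (if (i:ℕ) < s then minres p (z i) else p + (i:ℕ)) = v} ≃
      {i : Fin m // (i:ℕ) < s ∧ minres p (z i) = v} :=
  Equiv.subtypeEquiv (Equiv.refl _) (by
    intro i
    by_cases his : (i:ℕ) < s
    · simp [his]
    · simp only [his, if_false, Equiv.refl_apply, false_and, iff_false]
      intro h
      have h2 : (0:ℤ) ≤ ((i:ℕ):ℤ) := Int.natCast_nonneg _
      omega)

def cls_fiber_bad (p : ℤ) (hp : 0 < p) (hodd : p % 2 = 1) (s : ℕ) (z : Fin m → ℤ)
    {v : ℤ} (hv : ¬(0 ≤ v ∧ 2 * v < p)) :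
    {i : Fin m // (if (i:ℕ) < s then minres p (z i) else p + (i:ℕ)) = v} ≃
      {i : Fin m // ¬((i:ℕ) < s) ∧ ((p + (i:ℕ) : ℤ) = v)} :=
  Equiv.subtypeEquiv (Equiv.refl _) (by
    intro i
    by_cases his : (i:ℕ) < s
    · simp only [his, if_true, Equiv.refl_apply, not_true_eq_false, false_and, iff_false]
      intro h
      have h1 := minres_nonneg hp (z i)
      have h2 := minres_lt hp hodd (z i)
      omega
    · simp [his])

lemma backward (p : ℤ) (s : ℕ) (hp : 0 < p) (hodd : p % 2 = 1) (hs1 : 1 ≤ s) (hsm : s ≤ m)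
    (x y : Fin m → ℤ)
    (htail : ∀ i : Fin m, s ≤ (i:ℕ) → x i = y i)
    (hev : Even ((∑ i, y i) - (∑ i, x i)))
    (hcnt : ∀ v : ℤ, Nat.card {i : Fin m // (i:ℕ) < s ∧ minres p (y i) = v}
                   = Nat.card {i : Fin m // (i:ℕ) < s ∧ minres p (x i) = v}) :
    ∃ g ∈ WpC m p s, g x = y := by
  classical
  set clsx : Fin m → ℤ := fun i => if (i:ℕ) < s then minres p (x i) else p + (i:ℕ) with hclsx
  set clsy : Fin m → ℤ := fun i => if (i:ℕ) < s then minres p (y i) else p + (i:ℕ) with hclsy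
  have hfib : ∀ v : ℤ, Nat.card {i // clsy i = v} = Nat.card {i // clsx i = v} := by
    intro v
    by_cases hv : 0 ≤ v ∧ 2 * v < p
    · rw [Nat.card_congr (cls_fiber_good p s y hv.1 (by omega)),
        Nat.card_congr (cls_fiber_good p s x hv.1 (by omega))]
      exact hcnt v
    · rw [Nat.card_congr (cls_fiber_bad p hp hodd s y hv),
        Nat.card_congr (cls_fiber_bad p hp hodd s x hv)]
  have efib : ∀ v : ℤ, {i // clsy i = v} ≃ {i // clsx i = v} := fun v =>
    Fintype.equivOfCardEq (by
      rw [← Nat.card_eq_fintype_card, ← Nat.card_eq_fintype_card]; exact hfib v)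
  set E : Fin m ≃ Fin m := Equiv.ofFiberEquiv efib with hEdef
  have hE : ∀ i, clsx (E i) = clsy i := fun i => Equiv.ofFiberEquiv_map efib i
  have hEfix : ∀ i : Fin m, s ≤ (i:ℕ) → E i = i := by
    intro i hi
    have h1 : clsx (E i) = p + ((i:ℕ):ℤ) := by
      rw [hE i, hclsy]; simp [not_lt.mpr hi]
    have h2 : ¬ ((E i : ℕ) < s) := by
      intro hc
      have h3 : clsx (E i) = minres p (x (E i)) := by rw [hclsx]; simp [hc]
      have h4 := minres_nonneg hp (x (E i))
      have h5 := minres_lt hp hodd (x (E i))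
      have h6 : (0:ℤ) ≤ ((i:ℕ):ℤ) := Int.natCast_nonneg _
      omega
    have h3 : clsx (E i) = p + ((E i : ℕ):ℤ) := by rw [hclsx]; simp [h2]
    have h4 : ((E i : ℕ):ℤ) = ((i:ℕ):ℤ) := by omega
    exact Fin.ext (by exact_mod_cast h4)
  have hEs : ∀ i : Fin m, (i:ℕ) < s →
      ((E i : ℕ) < s ∧ minres p (x (E i)) = minres p (y i)) := by
    intro i hi
    have h1 : clsx (E i) = minres p (y i) := by rw [hE i, hclsy]; simp [hi]
    by_cases hc : (E i : ℕ) < s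
    · refine ⟨hc, ?_⟩
      rw [hclsx] at h1
      simpa [hc] using h1
    · exfalso
      have h3 : clsx (E i) = p + ((E i:ℕ):ℤ) := by rw [hclsx]; simp [hc]
      have h4 := minres_nonneg hp (y i)
      have h5 := minres_lt hp hodd (y i)
      have h6 : (0:ℤ) ≤ ((E i:ℕ):ℤ) := Int.natCast_nonneg _
      omega
  set D : Finset (Fin m) := Finset.univ.filter (fun i => ¬ (p ∣ (y i - x (E i)))) with hD
  have hmem : ∀ k : Fin m, k ∈ D ↔ ¬ p ∣ (y k - x (E k)) := by
    intro k; rw [hD]; simp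
  have hDlt : ∀ i ∈ D, (i:ℕ) < s := by
    intro i hi
    by_contra hc
    push_neg at hc
    apply (hmem i).mp hi
    rw [hEfix i hc, ← htail i hc, sub_self]
    exact dvd_zero p
  have hDdvd : ∀ i ∈ D, p ∣ (y i + x (E i)) := by
    intro i hi
    have his := hDlt i hi
    rcases minres_eq_minres hp (hEs i his).2 with h | h
    · exact absurd h ((hmem i).mp hi)
    · exact h
  have hsgn : ∀ k : Fin m, p ∣ (y k - (if k ∈ D then -(x (E k)) else x (E k))) := by
    intro k
    by_cases hk : k ∈ D
    · rw [if_pos hk, sub_neg_eq_add]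
      exact hDdvd k hk
    · rw [if_neg hk]
      exact not_not.mp (fun hc => hk ((hmem k).mpr hc))
  set t : Fin m → ℤ := fun k => (y k - (if k ∈ D then -(x (E k)) else x (E k))) / p with htdef
  have hpt : ∀ k, p * t k = y k - (if k ∈ D then -(x (E k)) else x (E k)) := fun k =>
    Int.mul_ediv_cancel' (hsgn k)
  have ht0 : ∀ i : Fin m, s ≤ (i:ℕ) → t i = 0 := by
    intro i hi
    have h1 : i ∉ D := fun hc => absurd (hDlt i hc) (by omega)
    rw [htdef]
    simp only [h1, if_false, hEfix i hi, ← htail i hi, sub_self, Int.zero_ediv]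
  have hev2 : Even (∑ k, t k) := by
    have hsum : p * (∑ k, t k)
        = (∑ k, y k) - (∑ k, (if k ∈ D then -(x (E k)) else x (E k))) := by
      rw [Finset.mul_sum, Finset.sum_congr rfl fun k _ => hpt k, Finset.sum_sub_distrib]
    have hcast : ((∑ k, t k : ℤ) : ZMod 2) = 0 := by
      have hp2 : ((p : ℤ) : ZMod 2) = 1 := by
        obtain ⟨c, hc⟩ : ∃ c, p = 2*c + 1 := ⟨p / 2, by omega⟩
        rw [hc]; push_cast
        have h20 : (2 : ZMod 2) = 0 := by decide
        rw [h20]; ring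
      have h1 : ((∑ k, t k : ℤ) : ZMod 2) = ((p * ∑ k, t k : ℤ) : ZMod 2) := by
        push_cast [hp2]; ring
      rw [h1, hsum]
      push_cast
      have h2 : ∀ k : Fin m, (if k ∈ D then -((x (E k) : ℤ) : ZMod 2) else ((x (E k):ℤ) : ZMod 2))
          = ((x (E k) : ℤ) : ZMod 2) := by
        intro k; by_cases hk : k ∈ D <;> simp [hk, CharTwo.neg_eq]
      rw [Finset.sum_congr rfl fun k _ => h2 k,
        Equiv.sum_comp E (fun k => ((x k : ℤ) : ZMod 2))]
      have h4 : ((((∑ k, y k) - (∑ k, x k) : ℤ)) : ZMod 2) = 0 :=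
        (ZMod.intCast_zmod_eq_zero_iff_dvd _ 2).mpr (even_iff_two_dvd.mp hev)
      push_cast at h4
      linear_combination h4
    exact even_iff_two_dvd.mpr ((ZMod.intCast_zmod_eq_zero_iff_dvd _ 2).mp hcast)
  refine ⟨trPerm p t * (sgPerm D * permMap E.symm), ?_, ?_⟩
  · refine mul_mem (mem_tr p s hs1 hsm t ht0 hev2) (mul_mem (mem_sg p s D hDlt) ?_)
    apply mem_perm p s (Equiv.Perm.support E.symm).card E.symm le_rfl
    intro i hi
    exact (Equiv.symm_apply_eq E).mpr (hEfix i hi).symm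
  · funext k
    rw [Equiv.Perm.mul_apply, Equiv.Perm.mul_apply, trPerm_apply, sgPerm_apply, permMap_apply,
      Equiv.symm_symm]
    have hk2 := hpt k
    by_cases hk : k ∈ D <;> simp only [hk, if_true, if_false] at hk2 ⊢ <;> linear_combination hk2

end Backward
theorem statement11 (m p : ℕ) (hp : p.Prime) (hodd : Odd p)
    (s : ℕ) (hs1 : 1 ≤ s) (hsm : s ≤ m)
    (mu nu : Fin m → ℤ) (hmu : IsPartitionVec mu) (hnu : IsPartitionVec nu)
    (hlmu : plen mu ≤ s) (hlnu : plen nu ≤ s) :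
    DotConj (WpC m (p : ℤ) s) mu nu ↔
      (Even ((∑ i, mu i) - (∑ i, nu i)) ∧
        ∀ r : ℕ, r ≤ (p - 1) / 2 →
          Nat.card {i : Fin m // (i : ℕ) < s ∧
            (Int.ModEq (p : ℤ) (mu i + rho i) (r : ℤ) ∨
              Int.ModEq (p : ℤ) (mu i + rho i) (-(r : ℤ)))} =
          Nat.card {i : Fin m // (i : ℕ) < s ∧
            (Int.ModEq (p : ℤ) (nu i + rho i) (r : ℤ) ∨
              Int.ModEq (p : ℤ) (nu i + rho i) (-(r : ℤ)))}) := by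
  have hpnat : p % 2 = 1 := Nat.odd_iff.mp hodd
  have hpi : (0:ℤ) < (p:ℤ) := by exact_mod_cast hp.pos
  have hoddi : (p:ℤ) % 2 = 1 := by omega
  have hsumid : (∑ i, (nu i + rho i)) - (∑ i, (mu i + rho i))
      = -((∑ i, mu i) - (∑ i, nu i)) := by
    rw [Finset.sum_add_distrib, Finset.sum_add_distrib]; ring
  constructor
  · rintro ⟨g, hg, hgx⟩
    constructor
    · have h1 := fwd_even (p:ℤ) s hg (fun k => mu k + rho k)
      rw [hgx] at h1
      have h1' : Even ((∑ k, (nu k + rho k)) - ∑ k, (mu k + rho k)) := h1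
      rw [hsumid] at h1'
      simpa using h1'.neg
    · intro r _
      have h1 := fwd_cnt (p:ℤ) s hg (fun k => mu k + rho k) (r:ℤ)
      rw [hgx] at h1
      exact h1.symm
  · rintro ⟨hev, hcnt⟩
    have htail : ∀ i : Fin m, s ≤ (i:ℕ) → mu i + rho i = nu i + rho i := by
      intro i hi
      rw [part_tail hmu hlmu hi, part_tail hnu hlnu hi]
    have hev' : Even ((∑ i, (nu i + rho i)) - ∑ i, (mu i + rho i)) := by
      rw [hsumid]; exact hev.neg
    have hcnt' : ∀ v : ℤ,
        Nat.card {i : Fin m // (i:ℕ) < s ∧ minres (p:ℤ) (nu i + rho i) = v}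
          = Nat.card {i : Fin m // (i:ℕ) < s ∧ minres (p:ℤ) (mu i + rho i) = v} := by
      intro v
      by_cases hv : 0 ≤ v ∧ 2 * v < (p:ℤ)
      · set r : ℕ := v.toNat with hr
        have hvr : (r:ℤ) = v := Int.toNat_of_nonneg hv.1
        have hrb : r ≤ (p - 1) / 2 := by omega
        have hc := hcnt r hrb
        have e1 : ∀ z : Fin m → ℤ,
            {i : Fin m // (i:ℕ) < s ∧ minres (p:ℤ) (z i) = v} ≃
            {i : Fin m // (i:ℕ) < s ∧
              (Int.ModEq (p:ℤ) (z i) (r:ℤ) ∨ Int.ModEq (p:ℤ) (z i) (-(r:ℤ)))} := by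
          intro z
          apply Equiv.subtypeEquiv (Equiv.refl _)
          intro i
          rw [Equiv.refl_apply]
          exact and_congr_right (fun _ => by
            rw [hvr]
            exact minres_eq_iff hpi hv.1 hv.2 (z i))
        rw [Nat.card_congr (e1 (fun k => nu k + rho k)),
          Nat.card_congr (e1 (fun k => mu k + rho k))]
        exact hc.symm
      · have e0 : ∀ z : Fin m → ℤ,
            IsEmpty {i : Fin m // (i:ℕ) < s ∧ minres (p:ℤ) (z i) = v} := by
          intro z
          refine ⟨fun ⟨i, hi⟩ => ?_⟩
          have h1 := minres_nonneg hpi (z i)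
          have h2 := minres_lt hpi hoddi (z i)
          exact hv ⟨hi.2 ▸ h1, hi.2 ▸ h2⟩
        haveI := e0 (fun k => nu k + rho k)
        haveI := e0 (fun k => mu k + rho k)
        rw [Nat.card_of_isEmpty, Nat.card_of_isEmpty]
    obtain ⟨g, hg, hgx⟩ := backward (p:ℤ) s hpi hoddi hs1 hsm
      (fun k => mu k + rho k) (fun k => nu k + rho k) htail hev' hcnt'
    exact ⟨g, hg, hgx⟩
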